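/- Suppose the dataset contains two entries with s_1 = s_2 but y_1 ≠ y_2, the loss ℓ is the squared Euclidean error, the model class {f_θ} contains all constant functions on the relevant input, and there exist permutations π'_1 ∈ G_1, π'_2 ∈ G_2 with π'_1(y_1) = π'_2(y_2). If the dataset consists only of these two entries, then inf_{θ,π} r_s = 0 < inf_θ r. -/

import Mathlib

/-- A permutation acting on a vector in `ℝ^n` by permuting coordinates. -/
def permVec {n : ℕ} (π : Equiv.Perm (Fin n)) (y : EuclideanSpace ℝ (Fin n)) :
    EuclideanSpace ℝ (Fin n) :=
  WithLp.toLp 2 (fun j => y (π j))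

/-- If the dataset consists of two entries with `s1 = s2` but `y1 ≠ y2`, the loss is the
squared Euclidean error, the model class contains all constant functions on the relevant
input, and some `π'_1 ∈ G1`, `π'_2 ∈ G2` satisfy `π'_1(y1) = π'_2(y2)`, then the infimum of
the symmetry-aware risk is `0`, which is strictly less than the infimum of the classic risk. -/
theorem stmt2 (Θ S : Type*) [Nonempty Θ] (n : ℕ)
    (f : Θ → S → EuclideanSpace ℝ (Fin n))
    (s1 s2 : S) (y1 y2 : EuclideanSpace ℝ (Fin n))
    (hs : s1 = s2) (hy : y1 ≠ y2)
    (G1 G2 : Subgroup (Equiv.Perm (Fin n)))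
    (hconst : ∀ v : EuclideanSpace ℝ (Fin n), ∃ θ : Θ, f θ s1 = v ∧ f θ s2 = v)
    (π1 : G1) (π2 : G2)
    (hπ : permVec (π1 : Equiv.Perm (Fin n)) y1 = permVec (π2 : Equiv.Perm (Fin n)) y2) :
    (⨅ p : Θ × G1 × G2,
        (1 / 2 : ℝ) * (‖f p.1 s1 - permVec (p.2.1 : Equiv.Perm (Fin n)) y1‖ ^ 2
          + ‖f p.1 s2 - permVec (p.2.2 : Equiv.Perm (Fin n)) y2‖ ^ 2)) = 0 ∧
    0 < ⨅ θ : Θ, (1 / 2 : ℝ) * (‖f θ s1 - y1‖ ^ 2 + ‖f θ s2 - y2‖ ^ 2) := by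
  constructor
  · apply le_antisymm
    · obtain ⟨θ, h1, h2⟩ := hconst (permVec (π1 : Equiv.Perm (Fin n)) y1)
      have hle := ciInf_le (f := fun p : Θ × G1 × G2 =>
          (1 / 2 : ℝ) * (‖f p.1 s1 - permVec (p.2.1 : Equiv.Perm (Fin n)) y1‖ ^ 2
            + ‖f p.1 s2 - permVec (p.2.2 : Equiv.Perm (Fin n)) y2‖ ^ 2))
          (c := (θ, π1, π2)) ⟨0, by rintro x ⟨p, rfl⟩; positivity⟩
      simpa [h1, h2, hπ] using hle
    · exact le_ciInf fun p => by positivity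
  · set c := ‖y1 - y2‖ with hc
    have hcpos : 0 < c := by simpa [hc] using sub_ne_zero.mpr hy
    have hlb : ∀ θ : Θ,
        c ^ 2 / 4 ≤ (1 / 2 : ℝ) * (‖f θ s1 - y1‖ ^ 2 + ‖f θ s2 - y2‖ ^ 2) := by
      intro θ
      have htri : c ≤ ‖f θ s1 - y1‖ + ‖f θ s2 - y2‖ := by
        have : y1 - y2 = (f θ s1 - y2) - (f θ s1 - y1) := by abel
        rw [hc, this, ← hs]
        calc ‖(f θ s1 - y2) - (f θ s1 - y1)‖ ≤ ‖f θ s1 - y2‖ + ‖f θ s1 - y1‖ :=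
              norm_sub_le _ _
          _ = ‖f θ s1 - y1‖ + ‖f θ s1 - y2‖ := by ring
      have ha : (0:ℝ) ≤ ‖f θ s1 - y1‖ := norm_nonneg _
      have hb : (0:ℝ) ≤ ‖f θ s2 - y2‖ := norm_nonneg _
      nlinarith [sq_nonneg (‖f θ s1 - y1‖ - ‖f θ s2 - y2‖)]
    have : c ^ 2 / 4 ≤ ⨅ θ : Θ, (1 / 2 : ℝ) * (‖f θ s1 - y1‖ ^ 2 + ‖f θ s2 - y2‖ ^ 2) :=
      le_ciInf hlb
    have h4 : 0 < c ^ 2 / 4 := by positivity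
    linarith
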